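/- Let R = K[x_1,...,x_n] be a polynomial ring over a field K, let I ⊆ R be an ideal and let J = ⟨g_1,...,g_t⟩ ⊆ R. Then there exists a nonzero polynomial h ∈ K[a_1,...,a_t] (defining a Zariski-open subset D = {a ∈ K^t : h(a) ≠ 0} of K^t) such that for every (a_1,...,a_t) ∈ K^t with h(a_1,...,a_t) ≠ 0, the saturation I : J^∞ equals the saturation I : (∑_{j=1}^t a_j g_j)^∞. -/

import Mathlib

set_option synthInstance.maxHeartbeats 1000000
set_option maxHeartbeats 1000000

/-- The saturation `I : J^∞` of an ideal `I` by an ideal `J`: the union (supremum) of the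
increasing chain of ideal quotients `I : J^k` for `k → ∞`. -/
noncomputable def Ideal.sat {R : Type*} [CommRing R] (I J : Ideal R) : Ideal R :=
  ⨆ k : ℕ, Submodule.colon I ((J ^ k : Ideal R) : Set R)

section Aux

variable {R : Type*} [CommRing R]

lemma colon_pow_mono (I J : Ideal R) : Monotone (fun k : ℕ => Submodule.colon I ((J ^ k : Ideal _) : Set _)) := by
  intro k l hkl x hx
  rw [Submodule.mem_colon] at hx ⊢
  intro p hp
  exact hx p (Ideal.pow_le_pow_right hkl hp)

lemma mem_sat_iff {I J : Ideal R} {x : R} :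
    x ∈ I.sat J ↔ ∃ k, x ∈ Submodule.colon I ((J ^ k : Ideal _) : Set _) := by
  constructor
  · intro hx
    exact (Submodule.mem_iSup_of_directed _ (colon_pow_mono I J).directed_le).mp hx
  · rintro ⟨k, hk⟩
    exact Submodule.mem_iSup_of_mem k hk

lemma le_sat (I J : Ideal R) : I ≤ I.sat J := by
  intro x hx
  refine mem_sat_iff.mpr ⟨0, ?_⟩
  rw [Submodule.mem_colon]
  intro p _
  exact Ideal.mul_mem_right p _ hx

lemma sat_antitone (I : Ideal R) {J J' : Ideal R} (h : J' ≤ J) : I.sat J ≤ I.sat J' := by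
  intro x hx
  obtain ⟨k, hk⟩ := mem_sat_iff.mp hx
  refine mem_sat_iff.mpr ⟨k, ?_⟩
  rw [Submodule.mem_colon] at hk ⊢
  intro p hp
  exact hk p (Ideal.pow_right_mono h k hp)

lemma sat_eq_colon_stab (I J : Ideal R) [IsNoetherianRing R] :
    ∃ N : ℕ, I.sat J = Submodule.colon I ((J ^ N : Ideal _) : Set _) := by
  obtain ⟨N, hN⟩ := monotone_stabilizes_iff_noetherian.mpr
    (inferInstance : IsNoetherian R R) ⟨fun k : ℕ => Submodule.colon I ((J ^ k : Ideal _) : Set _),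
      colon_pow_mono I J⟩
  refine ⟨N, le_antisymm (iSup_le fun k => ?_) (le_iSup (fun k : ℕ => Submodule.colon I ((J ^ k : Ideal _) : Set _)) N)⟩
  calc Submodule.colon I ((J ^ k : Ideal _) : Set _) ≤ Submodule.colon I ((J ^ (max k N) : Ideal _) : Set _) :=
        colon_pow_mono I J (le_max_left k N)
    _ = Submodule.colon I ((J ^ N : Ideal _) : Set _) := (hN (max k N) (le_max_right k N)).symm

/-- The saturation is saturated: `(I : J^∞) : J^k ≤ I : J^∞`. -/
lemma colon_sat_le (I J : Ideal R) [IsNoetherianRing R] (k : ℕ) :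
    Submodule.colon (I.sat J) ((J ^ k : Ideal _) : Set _) ≤ I.sat J := by
  obtain ⟨N, hN⟩ := sat_eq_colon_stab I J
  intro x hx
  refine mem_sat_iff.mpr ⟨k + N, ?_⟩
  rw [Submodule.mem_colon]
  intro p hp
  rw [pow_add] at hp
  have : ∀ p ∈ (J ^ k * J ^ N : Ideal R), x * p ∈ I := by
    intro q hq
    refine Submodule.mul_induction_on hq (fun a ha b hb => ?_) (fun q₁ q₂ h₁ h₂ => ?_)
    · have hxa : x * a ∈ I.sat J := by
        rw [Submodule.mem_colon] at hx
        simpa using hx a ha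
      rw [hN, Submodule.mem_colon] at hxa
      have := hxa b hb
      simpa [mul_assoc] using this
    · simpa [mul_add] using add_mem h₁ h₂
  simpa using this p hp

end Aux

/-- Let `R = K[x_1,...,x_n]`, `I ⊆ R` an ideal and `J = ⟨g_1,...,g_t⟩ ⊆ R`.  There is a
nonzero polynomial `h ∈ K[a_1,...,a_t]` (cutting out a Zariski-open subset of `K^t`) such
that for every point `a ∈ K^t` with `h(a) ≠ 0`, we have
`I : J^∞ = I : (∑ j a_j g_j)^∞`. -/
theorem exists_generic_linear_combination_sat {K : Type*} [Field K] {n t : ℕ}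
    (I : Ideal (MvPolynomial (Fin n) K)) (g : Fin t → MvPolynomial (Fin n) K)
    (J : Ideal (MvPolynomial (Fin n) K)) (hJ : J = Ideal.span (Set.range g)) :
    ∃ h : MvPolynomial (Fin t) K, h ≠ 0 ∧
      ∀ a : Fin t → K, MvPolynomial.eval a h ≠ 0 →
        Ideal.sat I J = Ideal.sat I (Ideal.span {∑ j, a j • g j}) := by
  classical
  set S : Ideal (MvPolynomial (Fin n) K) := I.sat J with hS
  obtain ⟨s, hsinf, hsprim⟩ : ∃ s : Finset (Ideal (MvPolynomial (Fin n) K)), s.inf id = S ∧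
      ∀ ⦃Q⦄, Q ∈ s → Ideal.IsPrimary Q := Ideal.isLasker (MvPolynomial (Fin n) K) (MvPolynomial (Fin n) K) S
  set s' : Finset (Ideal (MvPolynomial (Fin n) K)) := s.filter (fun Q => ¬ J ≤ Q.radical) with hs'def
  -- the discarded components are absorbed by saturation
  have hinf' : s'.inf id = S := by
    refine le_antisymm ?_ (hsinf ▸ Finset.inf_mono (Finset.filter_subset _ s))
    intro x hx
    have hmem : ∀ Q ∈ s', x ∈ Q := fun Q hQ => (Submodule.mem_finsetInf.mp hx) Q hQ
    have hkey : ∀ Q ∈ s, ∃ k : ℕ, ∀ m : ℕ, k ≤ m → ∀ y ∈ (J ^ m : Ideal (MvPolynomial (Fin n) K)), x * y ∈ Q := by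
      intro Q hQ
      by_cases hle : J ≤ Q.radical
      · have hJfg : J.FG := hJ ▸ Submodule.fg_span (Set.finite_range g)
        obtain ⟨k, hk⟩ := Ideal.exists_pow_le_of_le_radical_of_fg hle hJfg
        refine ⟨k, fun m hm y hy => ?_⟩
        have : y ∈ Q := ((Ideal.pow_le_pow_right hm).trans hk) hy
        exact Ideal.mul_mem_left Q x this
      · have hxQ : x ∈ Q := hmem Q (Finset.mem_filter.mpr ⟨hQ, hle⟩)
        exact ⟨0, fun m _ y _ => Ideal.mul_mem_right y Q hxQ⟩
    choose k hk using hkey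
    set N : ℕ := s.attach.sup (fun Q => k Q Q.2) with hN
    have hxc : x ∈ Submodule.colon S ((J ^ N : Ideal _) : Set _) := by
      rw [Submodule.mem_colon]
      intro p hp
      have : ∀ Q ∈ s, x * p ∈ Q := by
        intro Q hQ
        exact hk Q hQ N (Finset.le_sup (f := fun Q : {x // x ∈ s} => k Q.1 Q.2) (Finset.mem_attach s ⟨Q, hQ⟩)) p hp
      have hxp : x * p ∈ S := hsinf ▸ Submodule.mem_finsetInf.mpr (fun Q hQ => this Q hQ)
      simpa using hxp
    exact colon_sat_le I J N hxc
  -- genericity data for each remaining component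
  have key : ∀ Q ∈ s', ∃ hq : MvPolynomial (Fin t) K, hq ≠ 0 ∧
      ∀ a : Fin t → K, MvPolynomial.eval a hq ≠ 0 → (∑ j, a j • g j) ∉ Q.radical := by
    intro Q hQ
    have hnle : ¬ J ≤ Q.radical := (Finset.mem_filter.mp hQ).2
    obtain ⟨j0, hj0⟩ : ∃ j, g j ∉ Q.radical := by
      by_contra h
      push_neg at h
      exact hnle (hJ ▸ Ideal.span_le.mpr (by rintro _ ⟨j, rfl⟩; exact h j))
    set P : Ideal (MvPolynomial (Fin n) K) := Q.radical with hPdef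
    let π : MvPolynomial (Fin n) K →ₐ[K] MvPolynomial (Fin n) K ⧸ P := Ideal.Quotient.mkₐ K P
    have hc : π (g j0) ≠ 0 := by
      simpa [π, Ideal.Quotient.mkₐ_eq_mk, Ideal.Quotient.eq_zero_iff_mem] using hj0
    obtain ⟨ψ, hψ⟩ : ∃ ψ : Module.Dual K (MvPolynomial (Fin n) K ⧸ P), ψ (π (g j0)) ≠ 0 := by
      by_contra h
      push_neg at h
      exact hc ((Module.forall_dual_apply_eq_zero_iff K _).mp h)
    have heval : ∀ a : Fin t → K,
        MvPolynomial.eval a (∑ j, MvPolynomial.C (ψ (π (g j))) * MvPolynomial.X j)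
          = ψ (π (∑ j, a j • g j)) := by
      intro a
      rw [map_sum, map_sum, map_sum]
      refine Finset.sum_congr rfl fun j _ => ?_
      rw [map_smul, map_smul]
      simp [mul_comm, smul_eq_mul]
    refine ⟨∑ j, MvPolynomial.C (ψ (π (g j))) * MvPolynomial.X j, ?_, ?_⟩
    · intro h0
      apply hψ
      have := congrArg (MvPolynomial.eval (Pi.single j0 (1 : K))) h0
      rw [heval] at this
      simpa [Pi.single_apply, Finset.sum_ite_eq'] using this
    · intro a ha hmem
      apply ha
      rw [heval]
      rw [show π (∑ j, a j • g j) = 0 from Ideal.Quotient.eq_zero_iff_mem.mpr hmem]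
      simp
  choose hq hq0 hqprop using key
  refine ⟨∏ Q ∈ s'.attach, hq Q Q.2, ?_, ?_⟩
  · exact Finset.prod_ne_zero_iff.mpr fun Q _ => hq0 Q Q.2
  · intro a ha
    set f : MvPolynomial (Fin n) K := ∑ j, a j • g j with hf
    have hfnot : ∀ Q ∈ s', f ∉ Q.radical := by
      intro Q hQ
      refine hqprop Q hQ a (fun h0 => ha ?_)
      rw [map_prod]
      exact Finset.prod_eq_zero (Finset.mem_attach _ ⟨Q, hQ⟩) h0
    have hfJ : f ∈ J := by
      refine Submodule.sum_mem _ fun j _ => ?_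
      rw [MvPolynomial.smul_eq_C_mul]
      exact Ideal.mul_mem_left _ _ (hJ ▸ Ideal.subset_span ⟨j, rfl⟩)
    refine le_antisymm (sat_antitone I ?_) ?_
    · rwa [Ideal.span_le, Set.singleton_subset_iff]
    · intro x hx
      obtain ⟨m, hm⟩ := mem_sat_iff.mp hx
      have hxf : x * f ^ m ∈ I := by
        rw [Submodule.mem_colon] at hm
        have : f ^ m ∈ (Ideal.span {f} : Ideal (MvPolynomial (Fin n) K)) ^ m := by
          rw [Ideal.span_singleton_pow]
          exact Ideal.mem_span_singleton_self _
        simpa using hm _ this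
      have hxfS : x * f ^ m ∈ S := le_sat I J hxf
      have hxall : ∀ Q ∈ s', x ∈ Q := by
        intro Q hQ
        have hprim : Q.IsPrimary := hsprim (Finset.mem_of_mem_filter Q hQ)
        have hxfQ : x * f ^ m ∈ Q := by
          rw [← hsinf] at hxfS
          exact Submodule.mem_finsetInf.mp hxfS Q (Finset.mem_of_mem_filter Q hQ)
        rcases (Ideal.isPrimary_iff.mp hprim).2 hxfQ with h | h
        · exact h
        · exact absurd ((Ideal.isPrime_radical hprim).mem_of_pow_mem m h) (hfnot Q hQ)
      exact hinf' ▸ Submodule.mem_finsetInf.mpr hxall
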